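/- For any p, q, r, s ∈ ℕ with p/q ≥ 2 and r/s ≥ 2, the following are equivalent: (i) E_{p/q} ≤_𝒢 E_{r/s}; (ii) E_{p/q} ≲_𝒢 E_{r/s}; (iii) p/q ≤ r/s. -/

import Mathlib

open Filter

/-- A bundled finite simple graph. -/
structure FinGraph where
  V : Type
  [fintypeV : Fintype V]
  G : SimpleGraph V

attribute [instance] FinGraph.fintypeV

namespace FinGraph

/-- Helper constructor. -/
def mk' (V : Type) [Fintype V] (G : SimpleGraph V) : FinGraph := ⟨V, G⟩

/-- Strong product of simple graphs. -/
def strongProdAdj {α β : Type} (G : SimpleGraph α) (H : SimpleGraph β) :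
    SimpleGraph (α × β) where
  Adj x y := x ≠ y ∧ (G.Adj x.1 y.1 ∨ x.1 = y.1) ∧ (H.Adj x.2 y.2 ∨ x.2 = y.2)
  symm := ⟨by
    rintro x y ⟨hne, h1, h2⟩
    refine ⟨hne.symm, ?_, ?_⟩
    · rcases h1 with h | h
      · exact Or.inl h.symm
      · exact Or.inr h.symm
    · rcases h2 with h | h
      · exact Or.inl h.symm
      · exact Or.inr h.symm⟩
  loopless := ⟨by rintro x ⟨h, -⟩; exact h rfl⟩

/-- The `n`-th strong power of a simple graph, on vertex set `Fin n → α`. -/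
def strongPowAdj {α : Type} (G : SimpleGraph α) (n : ℕ) : SimpleGraph (Fin n → α) where
  Adj x y := x ≠ y ∧ ∀ i, G.Adj (x i) (y i) ∨ x i = y i
  symm := ⟨by
    rintro x y ⟨hne, h⟩
    refine ⟨hne.symm, fun i => ?_⟩
    rcases h i with h' | h'
    · exact Or.inl h'.symm
    · exact Or.inr h'.symm⟩
  loopless := ⟨by rintro x ⟨h, -⟩; exact h rfl⟩

/-- Disjoint union of simple graphs. -/
def disjUnionAdj {α β : Type} (G : SimpleGraph α) (H : SimpleGraph β) :
    SimpleGraph (α ⊕ β) where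
  Adj x y := (∃ a b, x = Sum.inl a ∧ y = Sum.inl b ∧ G.Adj a b) ∨
             (∃ a b, x = Sum.inr a ∧ y = Sum.inr b ∧ H.Adj a b)
  symm := ⟨by
    rintro x y (⟨a, b, rfl, rfl, h⟩ | ⟨a, b, rfl, rfl, h⟩)
    · exact Or.inl ⟨b, a, rfl, rfl, h.symm⟩
    · exact Or.inr ⟨b, a, rfl, rfl, h.symm⟩⟩
  loopless := ⟨by
    rintro x (⟨a, b, rfl, h, hadj⟩ | ⟨a, b, rfl, h, hadj⟩)
    · cases Sum.inl.inj h; exact hadj.ne rfl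
    · cases Sum.inr.inj h; exact hadj.ne rfl⟩

/-- Bundled strong product `G ⊠ H`. -/
def sprod (A B : FinGraph) : FinGraph := mk' (A.V × B.V) (strongProdAdj A.G B.G)

/-- Bundled `n`-th strong power `G^{⊠ n}`. -/
def spow (A : FinGraph) (n : ℕ) : FinGraph := mk' (Fin n → A.V) (strongPowAdj A.G n)

/-- Bundled disjoint union `G ⊔ H`. -/
def dUnion (A B : FinGraph) : FinGraph := mk' (A.V ⊕ B.V) (disjUnionAdj A.G B.G)

/-- Bundled complement graph. -/
def compl (A : FinGraph) : FinGraph := mk' A.V A.Gᶜ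

/-- Graph join `G + H`: the complement of the disjoint union of the complements. -/
def join (A B : FinGraph) : FinGraph := (A.compl.dUnion B.compl).compl

/-- The edgeless graph `E_n` on `n` vertices. -/
def edgeless (n : ℕ) : FinGraph := mk' (Fin n) ⊥

/-- `cohomLE A B`: there is a cohomomorphism from `A` to `B`, i.e. a graph homomorphism
from the complement of `A` to the complement of `B`. -/
def cohomLE (A B : FinGraph) : Prop := Nonempty (A.Gᶜ →g B.Gᶜ)

/-- Asymptotic cohomomorphism preorder: `A ≲ B` iff there is `f : ℕ → ℕ` with
`f n / n → 0` and `A^{⊠ n} ≤ B^{⊠ (n + f n)}` for all `n`. -/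
def asympCohomLE (A B : FinGraph) : Prop :=
  ∃ f : ℕ → ℕ, Tendsto (fun n => (f n : ℝ) / (n : ℝ)) atTop (nhds 0) ∧
    ∀ n, cohomLE (A.spow n) (B.spow (n + f n))

/-- The asymptotic spectrum of graphs `Δ(𝒢)`: nonnegative real graph parameters that are
normalised on edgeless graphs, multiplicative under the strong product, additive under
disjoint union, and monotone under cohomomorphism. -/
def Delta : Set (FinGraph → ℝ) :=
  { f | (∀ A, 0 ≤ f A) ∧ (∀ n : ℕ, f (edgeless n) = n) ∧
        (∀ A B, f (A.sprod B) = f A * f B) ∧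
        (∀ A B, f (A.dUnion B) = f A + f B) ∧
        (∀ A B, cohomLE A B → f A ≤ f B) }

/-- Vertex-transitivity of a bundled graph. -/
def IsVertexTransitive (A : FinGraph) : Prop :=
  ∀ u v : A.V, ∃ e : A.G ≃g A.G, e u = v

/-- Cyclic distance between `i, j ∈ {0, …, p-1}` modulo `p`. -/
def cycDist (p i j : ℕ) : ℕ := min ((p + i - j) % p) ((p + j - i) % p)

/-- The fraction graph `E_{p/q}`: vertex set `ℤ_p`, distinct vertices adjacent iff
their cyclic distance modulo `p` is strictly less than `q`. -/
def fracGraph (p q : ℕ) : FinGraph :=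
  mk' (Fin p)
    { Adj := fun i j => i ≠ j ∧ cycDist p i j < q
      symm := ⟨by
        rintro i j ⟨hne, hd⟩
        exact ⟨hne.symm, by simpa [cycDist, min_comm] using hd⟩⟩
      loopless := ⟨fun i h => h.1 rfl⟩ }

/-- The complement of the projective rank `ξ̄_f(G)`: the infimum of `d/r` over all
assignments of `r`-dimensional subspaces of `ℂ^d` to the vertices such that distinct
non-adjacent vertices receive orthogonal subspaces. -/
noncomputable def xibar (A : FinGraph) : ℝ :=
  sInf { x : ℝ | ∃ d r : ℕ, 0 < d ∧ 0 < r ∧ x = (d : ℝ) / (r : ℝ) ∧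
    ∃ W : A.V → Submodule ℂ (EuclideanSpace ℂ (Fin d)),
      (∀ v, Module.finrank ℂ (W v) = r) ∧
      ∀ v w : A.V, v ≠ w → ¬ A.G.Adj v w →
        ∀ x ∈ W v, ∀ y ∈ W w, (inner ℂ x y : ℂ) = 0 }

end FinGraph

open FinGraph

section Aux

open FinGraph Finset

lemma cycDist_comm (P x y : ℕ) : cycDist P x y = cycDist P y x := min_comm _ _

lemma cycDist_eq {P x y : ℕ} (hxy : x ≤ y) (hy : y < P) :
    cycDist P x y = min (y - x) (P - (y - x)) := by
  have hP : 0 < P := lt_of_le_of_lt (Nat.zero_le _) hy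
  unfold cycDist
  have h1 : P + x - y = P - (y - x) := by omega
  have h2 : P + y - x = P + (y - x) := by omega
  rw [h1, h2, Nat.add_mod_left]
  rcases Nat.eq_or_lt_of_le hxy with h | h
  · subst h; simp
  · rw [Nat.mod_eq_of_lt (by omega), Nat.mod_eq_of_lt (by omega), min_comm]

lemma modsub (r t v : ℕ) (ht : t < r) (hv : v < r) :
    (v + r - t) % r = if t ≤ v then v - t else v + r - t := by
  split_ifs with h
  · have : v + r - t = (v - t) + r := by omega
    rw [this, Nat.add_mod_right, Nat.mod_eq_of_lt (by omega)]
  · exact Nat.mod_eq_of_lt (by omega)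

lemma modsub_invol {r v x : ℕ} (hv : v < r) (hx : x < r) :
    (v + r - (v + r - x) % r) % r = x := by
  have hr : 0 < r := lt_of_le_of_lt (Nat.zero_le _) hv
  rw [modsub r x v hx hv]
  split_ifs with h
  · rw [modsub r (v - x) v (by omega) hv]
    split_ifs with h2 <;> omega
  · have hlt : v + r - x < r := by omega
    rw [modsub r (v + r - x) v hlt hv]
    split_ifs with h2 <;> omega

/-- Cliques in the fraction graph have at most `q` elements. -/
lemma cardA (q : ℕ) (hq : 0 < q) :
    ∀ p, 2 * q ≤ p → ∀ S : Finset ℕ, (∀ x ∈ S, x < p) →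
      (∀ x ∈ S, ∀ y ∈ S, x ≠ y → cycDist p x y < q) → S.card ≤ q := by
  intro p hp2q
  induction p, hp2q using Nat.le_induction with
  | base =>
    intro S hSb hSd
    have hinj : Set.InjOn (· % q) S := by
      intro x hx y hy hxy
      by_contra hne
      wlog hlt : x < y generalizing x y
      · exact this hy hx hxy.symm (Ne.symm hne) (by omega)
      have hdvd : q ∣ y - x := (Nat.modEq_iff_dvd' (le_of_lt hlt)).mp hxy
      obtain ⟨k, hk⟩ := hdvd
      have hxb := hSb x hx
      have hyb := hSb y hy
      have hk1 : k = 1 := by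
        have h0 : k ≠ 0 := by rintro rfl; omega
        by_contra hne1
        have h2 : 2 ≤ k := by omega
        have := Nat.mul_le_mul (le_refl q) h2
        omega
      have hyx : y - x = q := by rw [hk1, Nat.mul_one] at hk; omega
      have := hSd x hx y hy (by omega)
      rw [cycDist_eq (by omega) (by omega)] at this
      omega
    calc S.card = (S.image (· % q)).card := (Finset.card_image_of_injOn hinj).symm
      _ ≤ (Finset.range q).card := by
          apply Finset.card_le_card
          intro a ha
          simp only [Finset.mem_image] at ha
          obtain ⟨x, _, rfl⟩ := ha
          exact Finset.mem_range.mpr (Nat.mod_lt _ hq)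
      _ = q := Finset.card_range q
  | succ p hp IH =>
    intro S hSb hSd
    -- find z ∉ S
    have hz : ∃ z, z < p + 1 ∧ z ∉ S := by
      by_contra h
      push_neg at h
      have h0 : 0 ∈ S := h 0 (by omega)
      have hq' : q ∈ S := h q (by omega)
      have := hSd 0 h0 q hq' (by omega)
      rw [cycDist_eq (by omega) (by omega)] at this
      omega
    obtain ⟨z, hzp, hzS⟩ := hz
    set f : ℕ → ℕ := fun x => if x < z then x else x - 1 with hf
    have hmono : ∀ x ∈ S, ∀ y ∈ S, x < y → f x < f y ∧
        cycDist p (f x) (f y) < q := by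
      intro x hx y hy hlt
      have hxz : x ≠ z := fun h => hzS (h ▸ hx)
      have hyz : y ≠ z := fun h => hzS (h ▸ hy)
      have hyb := hSb y hy
      have hd := hSd x hx y hy (by omega)
      rw [cycDist_eq (by omega) (by omega), min_lt_iff] at hd
      have hfx : f x = if x < z then x else x - 1 := rfl
      have hfy : f y = if y < z then y else y - 1 := rfl
      have h1 : f x < f y := by rw [hfx, hfy]; split_ifs <;> omega
      refine ⟨h1, ?_⟩
      have hfyb : f y < p := by rw [hfy]; split_ifs <;> omega
      rw [cycDist_eq (le_of_lt h1) hfyb, min_lt_iff]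
      rw [hfx, hfy] at h1 ⊢
      split_ifs at h1 ⊢ <;> omega
    have hS' : (S.image f).card ≤ q := by
      apply IH (S.image f)
      · intro a ha
        simp only [Finset.mem_image] at ha
        obtain ⟨x, hx, rfl⟩ := ha
        have := hSb x hx
        have hxz : x ≠ z := fun h => hzS (h ▸ hx)
        simp only [hf]; split_ifs <;> omega
      · intro a ha b hb hab
        simp only [Finset.mem_image] at ha hb
        obtain ⟨x, hx, rfl⟩ := ha
        obtain ⟨y, hy, rfl⟩ := hb
        rcases Nat.lt_trichotomy x y with h | h | h
        · exact (hmono x hx y hy h).2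
        · exact absurd (by rw [h]) hab
        · rw [cycDist_comm]; exact (hmono y hy x hx h).2
    have hinj : Set.InjOn f S := by
      intro x hx y hy hxy
      by_contra hne
      rcases Nat.lt_trichotomy x y with h | h | h
      · exact absurd hxy (Nat.ne_of_lt (hmono x hx y hy h).1)
      · exact hne h
      · exact absurd hxy.symm (Nat.ne_of_lt (hmono y hy x hx h).1)
    rwa [Finset.card_image_of_injOn hinj] at hS'

end Aux
section Aux2
open FinGraph Finset

lemma arcCard {r s : ℕ} (hs : 0 < s) (hsr : s ≤ r) (v : Fin r) :
    (Finset.univ.filter fun t : Fin r => (v.val + r - t.val) % r < s).card = s := by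
  have hr : 0 < r := lt_of_lt_of_le hs hsr
  have key : (Finset.univ.filter fun t : Fin r => (v.val + r - t.val) % r < s).card
      = (Finset.range s).card := by
    apply Finset.card_bij' (i := fun t _ => (v.val + r - t.val) % r)
        (j := fun u _ => (⟨(v.val + r - u) % r, Nat.mod_lt _ hr⟩ : Fin r))
    · intro t ht
      simp only [Finset.mem_filter, Finset.mem_univ, true_and] at ht
      exact Finset.mem_range.mpr ht
    · intro u hu
      have hu' : u < s := Finset.mem_range.mp hu
      have hur : u < r := lt_of_lt_of_le hu' hsr
      simp only [Finset.mem_filter, Finset.mem_univ, true_and]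
      rw [modsub_invol v.isLt hur]
      exact hu'
    · intro t _
      apply Fin.ext
      exact modsub_invol v.isLt t.isLt
    · intro u hu
      have hur : u < r := lt_of_lt_of_le (Finset.mem_range.mp hu) hsr
      exact modsub_invol v.isLt hur
  rw [key, Finset.card_range]

lemma arcDist {r s : ℕ} (t v w : Fin r)
    (hv : (v.val + r - t.val) % r < s) (hw : (w.val + r - t.val) % r < s)
    (hne : v ≠ w) : cycDist r v.val w.val < s := by
  have hvw : v.val ≠ w.val := fun h => hne (Fin.ext h)
  rw [modsub r t.val v.val t.isLt v.isLt] at hv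
  rw [modsub r t.val w.val t.isLt w.isLt] at hw
  rcases Nat.le_total v.val w.val with h | h
  · rw [cycDist_eq h w.isLt, min_lt_iff]
    split_ifs at hv hw <;> omega
  · rw [cycDist_comm, cycDist_eq h v.isLt, min_lt_iff]
    split_ifs at hv hw <;> omega

end Aux2
section Aux3
open FinGraph Finset

lemma frac_adj {p q : ℕ} (i j : Fin p) :
    (fracGraph p q).G.Adj i j ↔ i ≠ j ∧ cycDist p i.val j.val < q := Iff.rfl

lemma spadj {α : Type} (G : SimpleGraph α) (n : ℕ) (x y : Fin n → α) :
    (strongPowAdj G n).Adj x y ↔ x ≠ y ∧ ∀ i, G.Adj (x i) (y i) ∨ x i = y i := Iff.rfl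

lemma powClique {p q : ℕ} (n : ℕ) (hq : 0 < q) (hpq : 2 * q ≤ p)
    (S : Finset (Fin n → Fin p))
    (h : ∀ x ∈ S, ∀ y ∈ S, x ≠ y →
      ∀ i, x i = y i ∨ (x i ≠ y i ∧ cycDist p (x i).val (y i).val < q)) :
    S.card ≤ q ^ n := by
  classical
  have hsub : S ⊆ Fintype.piFinset (fun i : Fin n => S.image (· i)) := by
    intro x hx
    rw [Fintype.mem_piFinset]
    intro i
    exact Finset.mem_image_of_mem _ hx
  calc S.card ≤ (Fintype.piFinset (fun i : Fin n => S.image (· i))).card :=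
        Finset.card_le_card hsub
    _ = ∏ i : Fin n, (S.image (· i)).card := Fintype.card_piFinset _
    _ ≤ ∏ _i : Fin n, q := by
        apply Finset.prod_le_prod
        · intro i _; exact Nat.zero_le _
        · intro i _
          have himg : ((S.image (· i)).image Fin.val).card ≤ q := by
            apply cardA q hq p hpq
            · intro a ha
              simp only [Finset.mem_image] at ha
              obtain ⟨b, _, rfl⟩ := ha
              exact b.isLt
            · intro a ha b hb hab
              simp only [Finset.mem_image] at ha hb
              obtain ⟨a', ha', rfl⟩ := ha
              obtain ⟨b', hb', rfl⟩ := hb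
              obtain ⟨x, hx, rfl⟩ := ha'
              obtain ⟨y, hy, rfl⟩ := hb'
              have hxy : x ≠ y := by
                intro hh; exact hab (by rw [hh])
              rcases h x hx y hy hxy i with heq | ⟨_, hd⟩
              · exact absurd (by rw [heq]) hab
              · exact hd
          rwa [Finset.card_image_of_injective _ Fin.val_injective] at himg
    _ = q ^ n := by rw [Finset.prod_const, Finset.card_univ, Fintype.card_fin]

lemma keyCount {p q r s : ℕ} (n m : ℕ) (hq : 0 < q) (hs : 0 < s)
    (hpq : 2 * q ≤ p) (hrs : 2 * s ≤ r)
    (h : cohomLE ((fracGraph p q).spow n) ((fracGraph r s).spow m)) :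
    p ^ n * s ^ m ≤ q ^ n * r ^ m := by
  classical
  obtain ⟨φ⟩ := h
  have hr : 0 < r := by omega
  have hp : 0 < p := by omega
  -- ψ is φ viewed on concrete types
  let ψ : (Fin n → Fin p) → (Fin m → Fin r) := fun x => φ x
  have hψ : ∀ x y : Fin n → Fin p, x ≠ y → ¬ (strongPowAdj (fracGraph p q).G n).Adj x y →
      ψ x ≠ ψ y ∧ ¬ (strongPowAdj (fracGraph r s).G m).Adj (ψ x) (ψ y) := by
    intro x y h1 h2
    have h3 : (((fracGraph p q).spow n).Gᶜ).Adj x y := ⟨h1, h2⟩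
    have h4 := φ.map_adj h3
    exact ⟨h4.1, h4.2⟩
  -- the double counting
  have main : ∑ x : Fin n → Fin p,
      (Finset.univ.filter fun j : Fin m → Fin r =>
        ∀ i, ((ψ x i).val + r - (j i).val) % r < s).card
      = ∑ j : Fin m → Fin r,
      (Finset.univ.filter fun x : Fin n → Fin p =>
        ∀ i, ((ψ x i).val + r - (j i).val) % r < s).card := by
    simp only [Finset.card_filter]
    exact Finset.sum_comm
  have lhs_eq : ∑ x : Fin n → Fin p,
      (Finset.univ.filter fun j : Fin m → Fin r =>
        ∀ i, ((ψ x i).val + r - (j i).val) % r < s).card = p ^ n * s ^ m := by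
    have hx : ∀ x : Fin n → Fin p,
        (Finset.univ.filter fun j : Fin m → Fin r =>
          ∀ i, ((ψ x i).val + r - (j i).val) % r < s).card = s ^ m := by
      intro x
      have : (Finset.univ.filter fun j : Fin m → Fin r =>
          ∀ i, ((ψ x i).val + r - (j i).val) % r < s)
          = Fintype.piFinset (fun i : Fin m =>
              Finset.univ.filter fun t : Fin r => ((ψ x i).val + r - t.val) % r < s) := by
        ext j
        simp only [Finset.mem_filter, Finset.mem_univ, true_and, Fintype.mem_piFinset]
      rw [this, Fintype.card_piFinset]
      calc ∏ i : Fin m, (Finset.univ.filter fun t : Fin r =>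
              ((ψ x i).val + r - t.val) % r < s).card
          = ∏ _i : Fin m, s := by
            apply Finset.prod_congr rfl
            intro i _
            exact arcCard hs (le_trans (Nat.le_mul_of_pos_left s (by norm_num)) hrs) _
        _ = s ^ m := by rw [Finset.prod_const, Finset.card_univ, Fintype.card_fin]
    calc ∑ x : Fin n → Fin p,
        (Finset.univ.filter fun j : Fin m → Fin r =>
          ∀ i, ((ψ x i).val + r - (j i).val) % r < s).card
        = ∑ _x : Fin n → Fin p, s ^ m := Finset.sum_congr rfl fun x _ => hx x
      _ = p ^ n * s ^ m := by
          rw [Finset.sum_const, Finset.card_univ, Fintype.card_fun,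
            Fintype.card_fin, Fintype.card_fin, smul_eq_mul]
  have rhs_le : ∑ j : Fin m → Fin r,
      (Finset.univ.filter fun x : Fin n → Fin p =>
        ∀ i, ((ψ x i).val + r - (j i).val) % r < s).card ≤ r ^ m * q ^ n := by
    calc ∑ j : Fin m → Fin r,
        (Finset.univ.filter fun x : Fin n → Fin p =>
          ∀ i, ((ψ x i).val + r - (j i).val) % r < s).card
        ≤ ∑ _j : Fin m → Fin r, q ^ n := by
          apply Finset.sum_le_sum
          intro j _
          apply powClique n hq hpq
          intro x hx y hy hxy i
          simp only [Finset.mem_filter, Finset.mem_univ, true_and] at hx hy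
          -- show adjacency in the strong power
          by_cases hAdj : (strongPowAdj (fracGraph p q).G n).Adj x y
          · rcases hAdj.2 i with hai | hei
            · exact Or.inr ⟨hai.1, ((frac_adj (x i) (y i)).mp hai).2⟩
            · exact Or.inl hei
          · exfalso
            obtain ⟨hne', hnadj⟩ := hψ x y hxy hAdj
            change ¬ (ψ x ≠ ψ y ∧ ∀ i, (fracGraph r s).G.Adj (ψ x i) (ψ y i) ∨ ψ x i = ψ y i) at hnadj
            push_neg at hnadj
            obtain ⟨i', hi'⟩ := hnadj hne'
            rw [frac_adj] at hi'
            push_neg at hi'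
            obtain ⟨h1, hne2⟩ := hi'
            have hd := h1 hne2
            have := arcDist (j i') (ψ x i') (ψ y i') (hx i') (hy i') hne2
            exact Nat.lt_irrefl _ (lt_of_lt_of_le this hd)
      _ = r ^ m * q ^ n := by
          rw [Finset.sum_const, Finset.card_univ, Fintype.card_fun,
            Fintype.card_fin, Fintype.card_fin, smul_eq_mul]
  rw [← lhs_eq, main]
  calc _ ≤ r ^ m * q ^ n := rhs_le
    _ = q ^ n * r ^ m := Nat.mul_comm _ _

end Aux3
section Aux4
open FinGraph Finset

lemma spowMono {A B : FinGraph} (h : cohomLE A B) (n : ℕ) :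
    cohomLE (A.spow n) (B.spow n) := by
  obtain ⟨e⟩ := h
  refine ⟨⟨fun x i => e (x i), ?_⟩⟩
  intro x y hxy
  obtain ⟨hne, hnadj⟩ := hxy
  have : ∃ i, ¬ A.G.Adj (x i) (y i) ∧ x i ≠ y i := by
    by_contra hcon
    push_neg at hcon
    apply hnadj
    refine ⟨hne, fun i => ?_⟩
    by_cases hxi : x i = y i
    · exact Or.inr hxi
    · exact Or.inl (by
        by_contra hnadji
        exact hxi (hcon i hnadji))
  obtain ⟨i, hni, hnei⟩ := this
  have hadj : A.Gᶜ.Adj (x i) (y i) := ⟨hnei, hni⟩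
  have hB := e.map_adj hadj
  obtain ⟨hBne, hBnadj⟩ := hB
  constructor
  · intro hcon
    exact hBne (congrFun hcon i)
  · intro hcon
    rcases hcon.2 i with ha | ha
    · exact hBnadj ha
    · exact hBne ha

lemma divBound {p r : ℕ} (hp : 0 < p) (hr : 0 < r) {x : ℕ} (hx : x < p) :
    x * r / p < r := by
  rw [Nat.div_lt_iff_lt_mul hp]
  calc x * r < p * r := Nat.mul_lt_mul_of_lt_of_le hx (le_refl r) hr
    _ = r * p := Nat.mul_comm _ _

lemma mapDist {p q r s : ℕ} (hq : 0 < q) (hs : 0 < s) (hpq : 2 * q ≤ p)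
    (hrs : 2 * s ≤ r) (hfrac : p * s ≤ q * r) {i j : ℕ} (hij : i < j) (hj : j < p)
    (hd : q ≤ cycDist p i j) :
    i * r / p < j * r / p ∧ s ≤ cycDist r (i * r / p) (j * r / p) := by
  have hp : 0 < p := by omega
  have hr : 0 < r := by omega
  rw [cycDist_eq (le_of_lt hij) hj, le_min_iff] at hd
  obtain ⟨hd1, hd2⟩ := hd
  have h3 : i * r + (j - i) * r = j * r := by
    rw [← Nat.add_mul]; congr 1; omega
  -- lower bound
  have e1 : s ≤ (j - i) * r / p := by
    rw [Nat.le_div_iff_mul_le hp]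
    calc s * p = p * s := Nat.mul_comm _ _
      _ ≤ q * r := hfrac
      _ ≤ (j - i) * r := Nat.mul_le_mul_right r hd1
  have e2 : i * r / p + (j - i) * r / p ≤ j * r / p := by
    rw [Nat.le_div_iff_mul_le hp, Nat.add_mul]
    have h1 : i * r / p * p ≤ i * r := Nat.div_mul_le_self _ _
    have h2 : (j - i) * r / p * p ≤ (j - i) * r := Nat.div_mul_le_self _ _
    omega
  have hlb : i * r / p + s ≤ j * r / p := by omega
  -- upper bound
  have hub : j * r / p ≤ i * r / p + (r - s) := by
    have hmod : i * r = p * (i * r / p) + i * r % p := (Nat.div_add_mod _ _).symm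
    have hsplit : j * r / p = i * r / p + (i * r % p + (j - i) * r) / p := by
      have h4 : j * r = p * (i * r / p) + (i * r % p + (j - i) * r) := by omega
      rw [h4, Nat.mul_add_div hp]
    have hbound : (i * r % p + (j - i) * r) / p < r - s + 1 := by
      rw [Nat.div_lt_iff_lt_mul hp]
      have hm : i * r % p < p := Nat.mod_lt _ hp
      have hd3 : j - i ≤ p - q := by omega
      have hdr : (j - i) * r ≤ (p - q) * r := Nat.mul_le_mul_right r hd3
      have hA : (p - q) * r = p * r - q * r := Nat.sub_mul p q r
      have hB2 : (r - s + 1) * p = r * p - s * p + p := by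
        rw [Nat.add_mul, Nat.sub_mul, Nat.one_mul]
      have hC : r * p = p * r := Nat.mul_comm _ _
      have hD : s * p = p * s := Nat.mul_comm _ _
      have hqr : q * r ≤ p * r := Nat.mul_le_mul_right r (by omega)
      have hsp : p * s ≤ p * r := Nat.mul_le_mul_left p (by omega)
      omega
    omega
  have hbr : j * r / p < r := divBound hp hr hj
  refine ⟨by omega, ?_⟩
  rw [cycDist_eq (by omega) hbr, le_min_iff]
  omega

lemma homConstr {p q r s : ℕ} (hq : 0 < q) (hs : 0 < s) (hpq : 2 * q ≤ p)
    (hrs : 2 * s ≤ r) (hfrac : p * s ≤ q * r) :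
    cohomLE (fracGraph p q) (fracGraph r s) := by
  have hp : 0 < p := by omega
  have hr : 0 < r := by omega
  refine ⟨⟨fun i => ⟨i.val * r / p, divBound hp hr i.isLt⟩, ?_⟩⟩
  intro a b hab
  obtain ⟨hne, hnadj⟩ := hab
  have hd : q ≤ cycDist p a.val b.val := by
    by_contra hcon
    exact hnadj ⟨hne, by omega⟩
  have main : a.val * r / p ≠ b.val * r / p ∧
      s ≤ cycDist r (a.val * r / p) (b.val * r / p) := by
    rcases Nat.lt_or_ge a.val b.val with h | h
    · have := mapDist hq hs hpq hrs hfrac h b.isLt hd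
      exact ⟨Nat.ne_of_lt this.1, this.2⟩
    · have hvne : a.val ≠ b.val := fun hh => hne (Fin.ext hh)
      have hlt : b.val < a.val := by omega
      rw [cycDist_comm] at hd
      have := mapDist hq hs hpq hrs hfrac hlt a.isLt hd
      exact ⟨(Nat.ne_of_lt this.1).symm, by rw [cycDist_comm]; exact this.2⟩
  constructor
  · intro hcon
    exact main.1 (congrArg Fin.val hcon)
  · rintro ⟨-, hlt⟩
    change cycDist r (a.val * r / p) (b.val * r / p) < s at hlt
    omega

end Aux4
/-- For fraction graphs: cohomomorphism, asymptotic cohomomorphism, and the inequality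
of fractions are all equivalent. -/
theorem fracGraph_cohom_tfae (p q r s : ℕ) (hq : 0 < q) (hs : 0 < s)
    (hpq : 2 * q ≤ p) (hrs : 2 * s ≤ r) :
    List.TFAE [cohomLE (fracGraph p q) (fracGraph r s),
               asympCohomLE (fracGraph p q) (fracGraph r s),
               (p : ℝ) / (q : ℝ) ≤ (r : ℝ) / (s : ℝ)] := by
  have hp : 0 < p := by omega
  have hr : 0 < r := by omega
  have hq0 : (0:ℝ) < q := by exact_mod_cast hq
  have hs0 : (0:ℝ) < s := by exact_mod_cast hs
  have hp0 : (0:ℝ) < p := by exact_mod_cast hp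
  have hr0 : (0:ℝ) < r := by exact_mod_cast hr
  tfae_have 3 → 1
  · intro h
    rw [div_le_div_iff₀ hq0 hs0] at h
    have hfrac : p * s ≤ q * r := by
      have h2 : p * s ≤ r * q := by exact_mod_cast h
      rwa [Nat.mul_comm r q] at h2
    exact homConstr hq hs hpq hrs hfrac
  tfae_have 1 → 2
  · intro h
    refine ⟨fun _ => 0, ?_, ?_⟩
    · simpa using tendsto_const_nhds
    · intro n
      exact spowMono h n
  tfae_have 2 → 3
  · rintro ⟨f, hf, hhom⟩
    have hx : (0:ℝ) < (p:ℝ)/q := div_pos hp0 hq0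
    have hy : (0:ℝ) < (r:ℝ)/s := div_pos hr0 hs0
    have hkey : ∀ n : ℕ, ((p:ℝ)/q)^n ≤ ((r:ℝ)/s)^(n + f n) := by
      intro n
      have hN := keyCount n (n + f n) hq hs hpq hrs (hhom n)
      rw [div_pow, div_pow, div_le_div_iff₀ (by positivity) (by positivity)]
      have hc : ((p:ℝ))^n * (s:ℝ)^(n + f n) ≤ ((q:ℝ))^n * (r:ℝ)^(n + f n) := by
        exact_mod_cast hN
      linarith [hc]
    have hL2 : (0:ℝ) ≤ Real.log ((r:ℝ)/s) := by
      apply Real.log_nonneg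
      rw [le_div_iff₀ hs0, one_mul]
      exact_mod_cast (by omega : s ≤ r)
    have htend : Filter.Tendsto (fun n : ℕ => (1 + (f n : ℝ)/n) * Real.log ((r:ℝ)/s))
        Filter.atTop (nhds (Real.log ((r:ℝ)/s))) := by
      have h1 : Filter.Tendsto (fun n : ℕ => 1 + (f n : ℝ)/n) Filter.atTop (nhds (1 + 0)) :=
        tendsto_const_nhds.add hf
      have h2 := h1.mul_const (Real.log ((r:ℝ)/s))
      simpa using h2
    have hlog : Real.log ((p:ℝ)/q) ≤ Real.log ((r:ℝ)/s) := by
      apply ge_of_tendsto htend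
      filter_upwards [Filter.eventually_ge_atTop 1] with n hn
      have hkn := hkey n
      have hlogn : (n:ℝ) * Real.log ((p:ℝ)/q) ≤ ((n:ℝ) + (f n:ℝ)) * Real.log ((r:ℝ)/s) := by
        have h3 := Real.log_le_log (by positivity) hkn
        rw [Real.log_pow, Real.log_pow] at h3
        push_cast at h3
        convert h3 using 2 <;> push_cast <;> ring
      have hn0 : (0:ℝ) < n := by exact_mod_cast hn
      have heq : (1 + (f n:ℝ)/n) * Real.log ((r:ℝ)/s)
          = (((n:ℝ) + (f n:ℝ)) * Real.log ((r:ℝ)/s))/n := by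
        field_simp
      rw [heq, le_div_iff₀ hn0]
      calc Real.log ((p:ℝ)/q) * n = (n:ℝ) * Real.log ((p:ℝ)/q) := by ring
        _ ≤ ((n:ℝ) + (f n:ℝ)) * Real.log ((r:ℝ)/s) := hlogn
    rwa [Real.log_le_log_iff hx hy] at hlog
  tfae_finish
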